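/- If n_1 ≥ 2 and n_2 ≥ 2 are integers, then the general position number of the Cartesian product of two complete graphs satisfies gp(K_{n_1} □ K_{n_2}) = n_1 + n_2 − 2. -/

import Mathlib

namespace SimpleGraph

variable {V : Type*}

/-- `S` is a general position set of `G`: no vertex of `S` lies on a geodesic
(shortest path) between two other vertices of `S`. -/
def IsGPSet (G : SimpleGraph V) (S : Set V) : Prop :=
  ∀ ⦃u v w : V⦄, u ∈ S → v ∈ S → w ∈ S → u ≠ v → u ≠ w → v ≠ w →
    ∀ p : G.Walk u v, p.IsPath → p.length = G.dist u v → w ∉ p.support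

/-- The general position number of `G`: the maximum cardinality of a general
position set of `G`. -/
noncomputable def gpNumber (G : SimpleGraph V) : ℕ :=
  sSup {n | ∃ S : Set V, G.IsGPSet S ∧ n = S.ncard}

/-- `ρ(G)`: the maximum number of vertices in a union of pairwise independent
complete subgraphs of `G`, where complete subgraphs `Q`, `Q'` are independent
if `d_G(u,u') ≥ 2` for every `u ∈ Q` and `u' ∈ Q'`. -/
noncomputable def rho (G : SimpleGraph V) : ℕ :=
  sSup {n | ∃ 𝒬 : Finset (Finset V),
    (∀ Q ∈ 𝒬, G.IsClique (Q : Set V)) ∧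
    (∀ Q ∈ 𝒬, ∀ Q' ∈ 𝒬, Q ≠ Q' → ∀ u ∈ Q, ∀ u' ∈ Q', 2 ≤ G.edist u u') ∧
    n = (⋃ Q ∈ 𝒬, (Q : Set V)).ncard}

/-- A graph is complete multipartite iff non-adjacency is transitive. -/
def IsCompleteMultipartiteGP (G : SimpleGraph V) : Prop := Transitive (¬G.Adj · ·)

/-- `η(G)`: the maximum order of an induced complete multipartite subgraph of
the complement of `G`. -/
noncomputable def eta (G : SimpleGraph V) : ℕ :=
  sSup {n | ∃ B : Set V, (Gᶜ.induce B).IsCompleteMultipartiteGP ∧ n = B.ncard}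

/-- An independent set of a graph. -/
def IsIndepSetGP (G : SimpleGraph V) (S : Set V) : Prop :=
  S.Pairwise fun u v => ¬ G.Adj u v

/-- The independence number `α(G)`. -/
noncomputable def indepNumGP (G : SimpleGraph V) : ℕ :=
  sSup {n | ∃ S : Set V, G.IsIndepSetGP S ∧ n = S.ncard}

end SimpleGraph

/-- The Kneser graph `K(n,k)`: vertices are the `k`-element subsets of an
`n`-element set, two vertices adjacent iff the corresponding sets are disjoint. -/
def kneserGraph (n k : ℕ) : SimpleGraph {s : Finset (Fin n) // s.card = k} where
  Adj a b := Disjoint a.1 b.1 ∧ a ≠ b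
  symm := by
    constructor
    rintro a b ⟨h1, h2⟩
    exact ⟨h1.symm, h2.symm⟩
  loopless := by
    constructor
    rintro a ⟨-, h⟩
    exact h rfl


namespace GPAux

open SimpleGraph Finset

variable {n₁ n₂ : ℕ}

/-- The rook's graph `K_{n₁} □ K_{n₂}`. -/
abbrev RG (n₁ n₂ : ℕ) : SimpleGraph (Fin n₁ × Fin n₂) :=
  (⊤ : SimpleGraph (Fin n₁)) □ (⊤ : SimpleGraph (Fin n₂))

lemma rg_adj {x y : Fin n₁ × Fin n₂} :
    (RG n₁ n₂).Adj x y ↔ (x.1 = y.1 ∧ x.2 ≠ y.2) ∨ (x.2 = y.2 ∧ x.1 ≠ y.1) := by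
  rw [boxProd_adj]; simp [top_adj]; tauto

lemma rg_not_adj {x y : Fin n₁ × Fin n₂} (hne : x ≠ y) (h : ¬ (RG n₁ n₂).Adj x y) :
    x.1 ≠ y.1 ∧ x.2 ≠ y.2 := by
  rw [rg_adj] at h; push_neg at h
  constructor
  · intro h1
    exact hne (Prod.ext h1 (h.1 h1))
  · intro h2
    exact hne (Prod.ext (h.2 h2) h2)

lemma rg_dist_le_two (x y : Fin n₁ × Fin n₂) : (RG n₁ n₂).dist x y ≤ 2 := by
  by_cases he : x = y
  · subst he; simp [SimpleGraph.dist_self]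
  by_cases ha : (RG n₁ n₂).Adj x y
  · calc (RG n₁ n₂).dist x y ≤ ha.toWalk.length := dist_le _
      _ ≤ 2 := by simp
  obtain ⟨h1, h2⟩ := rg_not_adj he ha
  have hxm : (RG n₁ n₂).Adj x (x.1, y.2) := by rw [rg_adj]; left; exact ⟨rfl, h2⟩
  have hmy : (RG n₁ n₂).Adj (x.1, y.2) y := by rw [rg_adj]; right; exact ⟨rfl, h1⟩
  calc (RG n₁ n₂).dist x y ≤ (Walk.cons hxm (Walk.cons hmy Walk.nil)).length := dist_le _
    _ = 2 := by simp

/-- The "L-free" property characterizing general position sets in the rook's graph. -/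
def LFree (S : Set (Fin n₁ × Fin n₂)) : Prop :=
  ∀ a b c d, (a, b) ∈ S → (a, d) ∈ S → (c, d) ∈ S → b ≠ d → a ≠ c → False

lemma lfree_of_gp {S : Set (Fin n₁ × Fin n₂)} (hS : (RG n₁ n₂).IsGPSet S) : LFree S := by
  intro a b c d h1 h2 h3 hbd hac
  have hxy : (RG n₁ n₂).Adj (a, b) (a, d) := by rw [rg_adj]; left; exact ⟨rfl, hbd⟩
  have hyz : (RG n₁ n₂).Adj (a, d) (c, d) := by rw [rg_adj]; right; exact ⟨rfl, hac⟩
  set p : (RG n₁ n₂).Walk (a, b) (c, d) := Walk.cons hxy (Walk.cons hyz Walk.nil) with hp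
  have hpath : p.IsPath := by
    rw [Walk.isPath_def]
    simp only [hp, Walk.support_cons, Walk.support_nil, List.nodup_cons, List.mem_cons,
      List.mem_singleton, List.not_mem_nil, Prod.mk.injEq, List.nodup_nil, and_true,
      not_false_eq_true, not_or]
    tauto
  have hne : (a, b) ≠ (c, d) := fun h => hac (congrArg Prod.fst h)
  have hnadj : ¬ (RG n₁ n₂).Adj (a, b) (c, d) := by
    rw [rg_adj]; push_neg
    exact ⟨fun h => absurd h hac, fun h => absurd h hbd⟩
  have hdist : (RG n₁ n₂).dist (a, b) (c, d) = 2 := by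
    have hle := dist_le p
    have hpos : 0 < (RG n₁ n₂).dist (a, b) (c, d) := (p.reachable).pos_dist_of_ne hne
    have hno : (RG n₁ n₂).dist (a, b) (c, d) ≠ 1 := fun h =>
      hnadj (dist_eq_one_iff_adj.mp h)
    have : p.length = 2 := by simp [hp]
    omega
  have hlen : p.length = (RG n₁ n₂).dist (a, b) (c, d) := by
    rw [hdist]; simp [hp]
  have := hS h1 h3 h2 hne (fun h => hbd (congrArg Prod.snd h))
    (fun h => hac (congrArg Prod.fst h).symm) p hpath hlen
  apply this
  simp [hp]

lemma gp_of_lfree {S : Set (Fin n₁ × Fin n₂)} (hS : LFree S) : (RG n₁ n₂).IsGPSet S := by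
  intro u v w hu hv hw huv huw hvw p hp hlen hmem
  have hsplit := congrArg Walk.length (p.take_spec hmem)
  rw [Walk.length_append] at hsplit
  have hduw : (RG n₁ n₂).dist u w ≤ (p.takeUntil w hmem).length := dist_le _
  have hdwv : (RG n₁ n₂).dist w v ≤ (p.dropUntil w hmem).length := dist_le _
  have h2 : (RG n₁ n₂).dist u v ≤ 2 := rg_dist_le_two u v
  have hpuw : 0 < (RG n₁ n₂).dist u w := ((p.takeUntil w hmem).reachable).pos_dist_of_ne huw
  have hpwv : 0 < (RG n₁ n₂).dist w v := ((p.dropUntil w hmem).reachable).pos_dist_of_ne hvw.symm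
  have h1uw : (RG n₁ n₂).dist u w = 1 := by omega
  have h1wv : (RG n₁ n₂).dist w v = 1 := by omega
  have haduw : (RG n₁ n₂).Adj u w := dist_eq_one_iff_adj.mp h1uw
  have hadwv : (RG n₁ n₂).Adj w v := dist_eq_one_iff_adj.mp h1wv
  have hduv : (RG n₁ n₂).dist u v = 2 := by omega
  have hnadj : ¬ (RG n₁ n₂).Adj u v := fun h => by
    rw [dist_eq_one_iff_adj.mpr h] at hduv; omega
  obtain ⟨hf, hs⟩ := rg_not_adj huv hnadj
  rw [rg_adj] at haduw hadwv
  rcases haduw with ⟨e1, e2⟩ | ⟨e1, e2⟩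
  · rcases hadwv with ⟨f1, f2⟩ | ⟨f1, f2⟩
    · exact hf (e1.trans f1)
    · have hwp : w = (u.1, v.2) := Prod.ext e1.symm f1
      exact hS u.1 u.2 v.1 v.2 hu (by rwa [hwp] at hw) hv hs hf
  · rcases hadwv with ⟨f1, f2⟩ | ⟨f1, f2⟩
    · have hwp : w = (v.1, u.2) := Prod.ext f1 e1.symm
      exact hS v.1 v.2 u.1 u.2 hv (by rwa [hwp] at hw) hu (Ne.symm hs) (Ne.symm hf)
    · exact hs (e1.trans f1)

lemma lfree_card (hn₁ : 2 ≤ n₁) (hn₂ : 2 ≤ n₂) (T : Finset (Fin n₁ × Fin n₂))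
    (hL : ∀ a b c d, (a, b) ∈ T → (a, d) ∈ T → (c, d) ∈ T → b ≠ d → a ≠ c → False) :
    T.card ≤ n₁ + n₂ - 2 := by
  classical
  set A := T.filter (fun p => ∃ q ∈ T, q ≠ p ∧ q.1 = p.1) with hA
  set B := T.filter (fun p => ¬ ∃ q ∈ T, q ≠ p ∧ q.1 = p.1) with hB
  have hTcard : A.card + B.card = T.card := Finset.card_filter_add_card_filter_not _
  have hwit : ∀ p ∈ A, ∃ q ∈ T, q ≠ p ∧ q.1 = p.1 := fun p hp => (Finset.mem_filter.mp hp).2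
  have hAT : ∀ p ∈ A, p ∈ T := fun p hp => (Finset.mem_filter.mp hp).1
  have hBT : ∀ p ∈ B, p ∈ T := fun p hp => (Finset.mem_filter.mp hp).1
  have hkey : ∀ p ∈ A, ∀ q ∈ T, p.2 = q.2 → p = q := by
    intro p hp q hq hcol
    by_contra hne
    obtain ⟨p', hp'T, hp'ne, hp'row⟩ := hwit p hp
    have hp'col : p'.2 ≠ p.2 := fun h => hp'ne (Prod.ext hp'row h)
    have hrow : p.1 ≠ q.1 := fun h => hne (Prod.ext h hcol)
    refine hL p.1 p'.2 q.1 p.2 ?_ ?_ ?_ hp'col hrow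
    · rwa [← hp'row, Prod.mk.eta]
    · rw [Prod.mk.eta]; exact hAT p hp
    · rw [hcol, Prod.mk.eta]; exact hq
  have hcolInj : Set.InjOn Prod.snd (A : Set (Fin n₁ × Fin n₂)) := by
    intro p hp q hq h
    exact hkey p hp q (hAT q hq) h
  have hrowInj : Set.InjOn Prod.fst (B : Set (Fin n₁ × Fin n₂)) := by
    intro p hp q hq h
    by_contra hne
    exact (Finset.mem_filter.mp hq).2 ⟨p, hBT p hp, hne, h⟩
  have hrowdisj : ∀ p ∈ A, ∀ q ∈ B, p.1 ≠ q.1 := by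
    intro p hp q hq h
    have hne : p ≠ q := by
      intro he
      exact (Finset.mem_filter.mp hq).2 (he ▸ (Finset.mem_filter.mp hp).2)
    exact (Finset.mem_filter.mp hq).2 ⟨p, hAT p hp, hne, h⟩
  set RA := A.image Prod.fst with hRA
  set RB := B.image Prod.fst with hRB
  set CA := A.image Prod.snd with hCA
  have hAc : A.card = CA.card := (Finset.card_image_of_injOn hcolInj).symm
  have hBc : B.card = RB.card := (Finset.card_image_of_injOn hrowInj).symm
  have hdisj : Disjoint RA RB := by
    rw [Finset.disjoint_left]
    rintro r hr hr'
    obtain ⟨p, hp, rfl⟩ := Finset.mem_image.mp hr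
    obtain ⟨q, hq, he⟩ := Finset.mem_image.mp hr'
    exact hrowdisj p hp q hq he.symm
  have hsum : RA.card + RB.card ≤ n₁ := by
    rw [← Finset.card_union_of_disjoint hdisj]
    simpa using Finset.card_le_univ (RA ∪ RB)
  have hAle : CA.card ≤ n₂ := by simpa using Finset.card_le_univ CA
  have hRAcases : A.card = 0 ∨ 1 ≤ RA.card := by
    rcases A.eq_empty_or_nonempty with h | h
    · left; simp [h]
    · right; exact Finset.card_pos.mpr (h.image _)
  by_cases hfull : A.card = n₂
  · have hCAuniv : CA = Finset.univ := by
      apply Finset.eq_univ_of_card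
      rw [← hAc, hfull]; simp
    have hBempty : B = ∅ := by
      rw [Finset.eq_empty_iff_forall_notMem]
      intro q hq
      have : q.2 ∈ CA := hCAuniv ▸ Finset.mem_univ _
      obtain ⟨p, hp, hpq⟩ := Finset.mem_image.mp this
      have := hkey p hp q (hBT q hq) hpq
      subst this
      exact hrowdisj p hp p hq rfl
    rw [hBempty] at hTcard
    simp at hTcard
    omega
  · omega

end GPAux

/-- If `n₁, n₂ ≥ 2`, then `gp(K_{n₁} □ K_{n₂}) = n₁ + n₂ - 2`. -/
theorem gpNumber_boxProd_complete (n₁ n₂ : ℕ) (h₁ : 2 ≤ n₁) (h₂ : 2 ≤ n₂) :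
    ((⊤ : SimpleGraph (Fin n₁)) □ (⊤ : SimpleGraph (Fin n₂))).gpNumber
      = n₁ + n₂ - 2 := by
  classical
  haveI : NeZero n₁ := ⟨by omega⟩
  haveI : NeZero n₂ := ⟨by omega⟩
  have hbound : ∀ n ∈ {n | ∃ S : Set (Fin n₁ × Fin n₂),
      (GPAux.RG n₁ n₂).IsGPSet S ∧ n = S.ncard}, n ≤ n₁ + n₂ - 2 := by
    rintro n ⟨S, hgp, rfl⟩
    have hL := GPAux.lfree_of_gp hgp
    rw [Set.ncard_eq_toFinset_card' S]
    apply GPAux.lfree_card h₁ h₂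
    intro a b c d m1 m2 m3 hbd hac
    exact hL a b c d (Set.mem_toFinset.mp m1) (Set.mem_toFinset.mp m2)
      (Set.mem_toFinset.mp m3) hbd hac
  -- the extremal set: the first row and first column, minus the corner
  set Sf : Finset (Fin n₁ × Fin n₂) :=
    ((Finset.univ.erase (0 : Fin n₂)).image fun j => ((0 : Fin n₁), j)) ∪
    ((Finset.univ.erase (0 : Fin n₁)).image fun i => (i, (0 : Fin n₂))) with hSf
  have hmemSf : ∀ p : Fin n₁ × Fin n₂,
      p ∈ Sf ↔ (p.1 = 0 ∧ p.2 ≠ 0) ∨ (p.2 = 0 ∧ p.1 ≠ 0) := by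
    intro p
    simp only [hSf, Finset.mem_union, Finset.mem_image, Finset.mem_erase, Finset.mem_univ,
      and_true]
    constructor
    · rintro (⟨j, hj, rfl⟩ | ⟨i, hi, rfl⟩)
      · exact Or.inl ⟨rfl, hj⟩
      · exact Or.inr ⟨rfl, hi⟩
    · rintro (⟨h1, h2⟩ | ⟨h1, h2⟩)
      · exact Or.inl ⟨p.2, h2, by rw [← h1, Prod.mk.eta]⟩
      · exact Or.inr ⟨p.1, h2, by rw [← h1, Prod.mk.eta]⟩
  have hSfcard : Sf.card = n₁ + n₂ - 2 := by
    rw [hSf, Finset.card_union_of_disjoint, Finset.card_image_of_injective,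
      Finset.card_image_of_injective]
    · rw [Finset.card_erase_of_mem (Finset.mem_univ _),
        Finset.card_erase_of_mem (Finset.mem_univ _)]
      simp only [Finset.card_univ, Fintype.card_fin]
      omega
    · intro i i' h; exact (Prod.mk.injEq _ _ _ _).mp h |>.1
    · intro j j' h; exact (Prod.mk.injEq _ _ _ _).mp h |>.2
    · rw [Finset.disjoint_left]
      rintro p hp hp'
      obtain ⟨j, hj, rfl⟩ := Finset.mem_image.mp hp
      obtain ⟨i, hi, he⟩ := Finset.mem_image.mp hp'
      have : i = 0 := congrArg Prod.fst he
      exact (Finset.mem_erase.mp hi).1 this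
  have hLfree : GPAux.LFree (↑Sf : Set (Fin n₁ × Fin n₂)) := by
    intro a b c d m1 m2 m3 hbd hac
    rw [Finset.mem_coe, hmemSf] at m1 m2 m3
    simp only at m1 m2 m3
    rcases m2 with ⟨ha0, hd0⟩ | ⟨hd0, ha0⟩
    · rcases m3 with ⟨hc0, _⟩ | ⟨hd0', _⟩
      · exact hac (ha0.trans hc0.symm)
      · exact hd0 hd0'
    · rcases m1 with ⟨ha0', _⟩ | ⟨hb0, _⟩
      · exact ha0 ha0'
      · exact hbd (hb0.trans hd0.symm)
  have hgpSf : (GPAux.RG n₁ n₂).IsGPSet (↑Sf : Set (Fin n₁ × Fin n₂)) :=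
    GPAux.gp_of_lfree hLfree
  have hmem : n₁ + n₂ - 2 ∈ {n | ∃ S : Set (Fin n₁ × Fin n₂),
      (GPAux.RG n₁ n₂).IsGPSet S ∧ n = S.ncard} :=
    ⟨↑Sf, hgpSf, by rw [Set.ncard_coe_finset, hSfcard]⟩
  rw [SimpleGraph.gpNumber]
  exact le_antisymm (csSup_le ⟨n₁ + n₂ - 2, hmem⟩ hbound)
    (le_csSup ⟨n₁ + n₂ - 2, hbound⟩ hmem)
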